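/- There is an absolute constant C > 0 such that the following holds for every dimension d ≥ 1. Let H be a Hermitian d×d matrix with orthonormal eigenbasis {ψ_i} and eigenvalues {E_i}, let β, μ > 0 with βμ ≤ 1, and let A be a d×d matrix satisfying ⟨ψ_i, A ψ_j⟩ = 0 whenever |E_i − E_j| > μ. Then, with ρ := e^{−βH}/Tr(e^{−βH}), one has ‖A − ρ^{1/2} A ρ^{−1/2}‖ ≤ C·βμ·‖A‖. -/

import Mathlib

open scoped ComplexOrder Matrix

namespace Stmt18

/-- The space of `d × d` complex matrices. -/
abbrev Mat (d : ℕ) := Matrix (Fin d) (Fin d) ℂ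

/-- Operator (spectral) norm of a complex matrix. -/
noncomputable def opNorm {m n : Type*} [Fintype m] [Fintype n] [DecidableEq n]
    (A : Matrix m n ℂ) : ℝ :=
  ‖LinearMap.toContinuousLinearMap (Matrix.toEuclideanLin A)‖

/-- The Gibbs state `e^{-βH}/Tr e^{-βH}`. -/
noncomputable def gibbs {d : ℕ} (H : Mat d) (β : ℝ) : Mat d :=
  ((NormedSpace.exp ((-(β : ℂ)) • H)).trace)⁻¹ • NormedSpace.exp ((-(β : ℂ)) • H)

open scoped Matrix.Norms.L2Operator

lemma opNorm_eq {d : ℕ} (A : Mat d) : opNorm A = ‖A‖ := rfl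

lemma norm_diagonal_le {d : ℕ} {v : Fin d → ℂ} {c : ℝ} (hc : 0 ≤ c) (h : ∀ i, ‖v i‖ ≤ c) :
    ‖Matrix.diagonal v‖ ≤ c := by
  rw [Matrix.l2_opNorm_def]
  refine ContinuousLinearMap.opNorm_le_bound _ hc fun x => ?_
  simp only [LinearEquiv.trans_apply, LinearMap.coe_toContinuousLinearMap']
  rw [Matrix.toEuclideanLin_apply]
  rw [EuclideanSpace.norm_eq, EuclideanSpace.norm_eq]
  rw [← Real.sqrt_sq hc, ← Real.sqrt_mul (sq_nonneg c)]
  apply Real.sqrt_le_sqrt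
  rw [Finset.mul_sum]
  apply Finset.sum_le_sum
  intro i _
  have h1 : ‖(WithLp.toLp 2 ((Matrix.diagonal v) *ᵥ x.ofLp)) i‖
      = ‖v i * x i‖ := by
    simp [Matrix.mulVec_diagonal]
  rw [h1, norm_mul, mul_pow]
  have h2 : ‖v i‖ ^ 2 ≤ c ^ 2 := by nlinarith [norm_nonneg (v i), h i]
  exact mul_le_mul_of_nonneg_right h2 (sq_nonneg _)


lemma norm_one_eq {d : ℕ} (hd : 0 < d) : ‖(1 : Mat d)‖ = 1 := by
  have h := Matrix.l2_opNorm_conjTranspose_mul_self (1 : Mat d)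
  simp only [Matrix.conjTranspose_one, mul_one] at h
  have h0 : (1 : Mat d) ≠ 0 := by
    intro h1
    have := congrFun (congrFun h1 ⟨0, hd⟩) ⟨0, hd⟩
    simp [Matrix.one_apply] at this
  have hn : ‖(1 : Mat d)‖ ≠ 0 := by
    simpa using h0
  field_simp at h
  linarith [h.symm]

lemma norm_unitary_conj {d : ℕ} (hd : 0 < d) {U : Mat d} (hU : Uᴴ * U = 1) (M : Mat d) :
    ‖U * M * Uᴴ‖ = ‖M‖ := by
  have hU' : U * Uᴴ = 1 := mul_eq_one_comm.mp hU
  have hUn : ‖U‖ = 1 := by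
    have h := Matrix.l2_opNorm_conjTranspose_mul_self U
    rw [hU, norm_one_eq hd] at h
    nlinarith [norm_nonneg U]
  have hUHn : ‖Uᴴ‖ = 1 := by rw [Matrix.l2_opNorm_conjTranspose]; exact hUn
  have key : ∀ (V W : Mat d), ‖V‖ = 1 → ‖W‖ = 1 → ∀ X : Mat d, ‖V * X * W‖ ≤ ‖X‖ := by
    intro V W hV hW X
    calc ‖V * X * W‖ ≤ ‖V * X‖ * ‖W‖ := Matrix.l2_opNorm_mul _ _
      _ ≤ ‖V‖ * ‖X‖ * ‖W‖ := by
          have := Matrix.l2_opNorm_mul V X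
          nlinarith [norm_nonneg W]
      _ = ‖X‖ := by rw [hV, hW]; ring
  refine le_antisymm (key U Uᴴ hUn hUHn M) ?_
  have : M = Uᴴ * (U * M * Uᴴ) * U := by
    rw [show Uᴴ * (U * M * Uᴴ) * U = (Uᴴ * U) * M * (Uᴴ * U) by noncomm_ring, hU]
    simp
  nth_rewrite 1 [this]
  exact key Uᴴ U hUHn hUn _


noncomputable def omg : ℂ := ⟨-(1/2), Real.sqrt 3 / 2⟩

lemma omg_sq : omg ^ 2 + omg + 1 = 0 := by
  have h3 : Real.sqrt 3 * Real.sqrt 3 = 3 := Real.mul_self_sqrt (by norm_num)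
  rw [pow_two]
  apply Complex.ext <;>
    simp only [omg, Complex.mul_re, Complex.mul_im, Complex.add_re, Complex.add_im,
      Complex.one_re, Complex.one_im, Complex.zero_re, Complex.zero_im] <;> nlinarith [h3]

lemma omg_abs : ‖omg‖ = 1 := by
  have h3 : Real.sqrt 3 * Real.sqrt 3 = 3 := Real.mul_self_sqrt (by norm_num)
  rw [Complex.norm_def]
  have : Complex.normSq omg = 1 := by
    simp only [omg, Complex.normSq_mk]
    nlinarith [h3]
  rw [this]
  exact Real.sqrt_one

lemma omg_ne : omg ≠ 0 := by
  intro h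
  have := omg_abs
  rw [h, norm_zero] at this
  norm_num at this

lemma omg_cube : omg ^ 3 = 1 := by linear_combination (omg - 1) * omg_sq

lemma omg_norm_zpow (z : ℤ) : ‖omg ^ z‖ = 1 := by
  rw [norm_zpow, omg_abs, one_zpow]

lemma omg_sum (l : ℤ) (hl : |l| ≤ 2) :
    (∑ m ∈ Finset.range 3, omg ^ ((m : ℤ) * l)) = if l = 0 then 3 else 0 := by
  have hsum : (∑ m ∈ Finset.range 3, omg ^ ((m : ℤ) * l))
      = 1 + omg ^ l + omg ^ (2 * l) := by
    rw [Finset.sum_range_succ, Finset.sum_range_succ, Finset.sum_range_one]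
    norm_num
  rw [hsum]
  rw [abs_le] at hl
  obtain ⟨hl1, hl2⟩ := hl
  interval_cases l
  · -- l = -2
    simp only [if_neg (by omega : (-2 : ℤ) ≠ 0)]
    rw [show ((2:ℤ) * (-2)) = -4 by norm_num]
    rw [show ((-2:ℤ)) = -(2:ℤ) by norm_num, show ((-4:ℤ)) = -(4:ℤ) by norm_num]
    rw [zpow_neg, zpow_neg]
    rw [show ((2:ℤ)) = ((2:ℕ):ℤ) by norm_num, show ((4:ℤ)) = ((4:ℕ):ℤ) by norm_num,
      zpow_natCast, zpow_natCast]
    have h4 : omg ^ (4:ℕ) = omg := by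
      calc omg ^ (4:ℕ) = omg ^ 3 * omg := by ring
        _ = omg := by rw [omg_cube]; ring
    rw [h4]
    have hinv1 : omg⁻¹ = omg ^ (2:ℕ) := inv_eq_of_mul_eq_one_right (by linear_combination omg_cube)
    have hinv2 : (omg ^ (2:ℕ))⁻¹ = omg := inv_eq_of_mul_eq_one_right (by linear_combination omg_cube)
    rw [hinv1, hinv2]
    linear_combination omg_sq
  · -- l = -1
    simp only [if_neg (by omega : (-1 : ℤ) ≠ 0)]
    rw [show ((2:ℤ) * (-1)) = -2 by norm_num]
    rw [show ((-1:ℤ)) = -(1:ℤ) by norm_num, show ((-2:ℤ)) = -(2:ℤ) by norm_num]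
    rw [zpow_neg, zpow_neg, zpow_one]
    rw [show ((2:ℤ)) = ((2:ℕ):ℤ) by norm_num, zpow_natCast]
    have hinv1 : omg⁻¹ = omg ^ (2:ℕ) := inv_eq_of_mul_eq_one_right (by linear_combination omg_cube)
    have hinv2 : (omg ^ (2:ℕ))⁻¹ = omg := inv_eq_of_mul_eq_one_right (by linear_combination omg_cube)
    rw [hinv1, hinv2]
    linear_combination omg_sq
  · norm_num
  · -- l = 1
    simp only [if_neg (by omega : (1 : ℤ) ≠ 0)]
    rw [zpow_one, show ((2:ℤ) * 1) = ((2:ℕ):ℤ) by norm_num, zpow_natCast]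
    linear_combination omg_sq
  · -- l = 2
    simp only [if_neg (by omega : (2 : ℤ) ≠ 0)]
    rw [show ((2:ℤ) * 2) = ((4:ℕ):ℤ) by norm_num, show ((2:ℤ)) = ((2:ℕ):ℤ) by norm_num,
      zpow_natCast, zpow_natCast]
    linear_combination (omg ^ 2 - omg + 1) * omg_sq


lemma norm_part_le {d : ℕ} (nn : Fin d → ℤ) (B : Mat d)
    (hB : ∀ i j, B i j ≠ 0 → |nn i - nn j| ≤ 1) (k : ℤ) (hk : |k| ≤ 1) :
    ‖(Matrix.of fun i j => if nn i - nn j = k then B i j else 0 : Mat d)‖ ≤ ‖B‖ := by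
  set W : ℕ → Mat d := fun m => Matrix.diagonal fun i => omg ^ ((m : ℤ) * nn i) with hW
  have hstar : ∀ z : ℤ, star (omg ^ z) = omg ^ (-z) := by
    intro z
    rw [star_zpow₀, Complex.star_def, ← Complex.inv_eq_conj omg_abs, inv_zpow, ← zpow_neg]
  have hconj : ∀ m : ℕ, ∀ i j, (W m * B * (W m)ᴴ) i j
      = omg ^ ((m : ℤ) * nn i) * B i j * omg ^ (-((m : ℤ) * nn j)) := by
    intro m i j
    rw [Matrix.diagonal_conjTranspose, Matrix.mul_diagonal, Matrix.diagonal_mul]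
    simp only [Pi.star_apply]
    rw [hstar]
  have hId : (Matrix.of fun i j => if nn i - nn j = k then B i j else 0 : Mat d)
      = (3:ℂ)⁻¹ • ∑ m ∈ Finset.range 3, omg ^ (-(k * (m:ℤ))) • (W m * B * (W m)ᴴ) := by
    ext i j
    simp only [Matrix.of_apply, Matrix.smul_apply, Matrix.sum_apply, smul_eq_mul]
    rw [Finset.mul_sum]
    have hterm : ∀ m ∈ Finset.range 3, (3:ℂ)⁻¹ * (omg ^ (-(k * (m:ℤ))) * (W m * B * (W m)ᴴ) i j)
        = (3:ℂ)⁻¹ * (omg ^ ((m:ℤ) * (nn i - nn j - k)) * B i j) := by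
      intro m _
      rw [hconj]
      rw [show omg ^ (-(k * (m:ℤ))) * (omg ^ ((m : ℤ) * nn i) * B i j * omg ^ (-((m : ℤ) * nn j)))
        = (omg ^ (-(k * (m:ℤ))) * omg ^ ((m : ℤ) * nn i) * omg ^ (-((m : ℤ) * nn j))) * B i j by ring]
      rw [← zpow_add₀ omg_ne, ← zpow_add₀ omg_ne]
      rw [show -(k * (m:ℤ)) + (m : ℤ) * nn i + -((m : ℤ) * nn j) = (m:ℤ) * (nn i - nn j - k) by ring]
    rw [Finset.sum_congr rfl hterm, ← Finset.mul_sum]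
    by_cases hB0 : B i j = 0
    · simp [hB0]
    · have habs : |nn i - nn j - k| ≤ 2 := by
        have h1 := hB i j hB0
        rw [abs_le] at h1
        have hk' := hk
        rw [abs_le] at hk'
        rw [abs_le]
        omega
      rw [show (∑ m ∈ Finset.range 3, omg ^ ((m:ℤ) * (nn i - nn j - k)) * B i j)
          = (∑ m ∈ Finset.range 3, omg ^ ((m:ℤ) * (nn i - nn j - k))) * B i j from
        (Finset.sum_mul _ _ _).symm]
      rw [omg_sum _ habs]
      by_cases hcase : nn i - nn j = k
      · rw [if_pos hcase, if_pos (by omega)]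
        ring
      · rw [if_neg hcase, if_neg (by omega)]
        ring
  rw [hId]
  rw [norm_smul]
  have hterm2 : ∀ m ∈ Finset.range 3, ‖omg ^ (-(k * (m:ℤ))) • (W m * B * (W m)ᴴ)‖ ≤ ‖B‖ := by
    intro m _
    rw [norm_smul, omg_norm_zpow, one_mul]
    have hWn : ‖W m‖ ≤ 1 := norm_diagonal_le zero_le_one fun i => le_of_eq (omg_norm_zpow _)
    have hWHn : ‖(W m)ᴴ‖ ≤ 1 := by rw [Matrix.l2_opNorm_conjTranspose]; exact hWn
    have h1 : ‖W m * B‖ ≤ ‖B‖ := by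
      calc ‖W m * B‖ ≤ ‖W m‖ * ‖B‖ := Matrix.l2_opNorm_mul _ _
        _ ≤ 1 * ‖B‖ := mul_le_mul_of_nonneg_right hWn (norm_nonneg _)
        _ = ‖B‖ := one_mul _
    calc ‖W m * B * (W m)ᴴ‖ ≤ ‖W m * B‖ * ‖(W m)ᴴ‖ := Matrix.l2_opNorm_mul _ _
      _ ≤ ‖B‖ * 1 := mul_le_mul h1 hWHn (norm_nonneg _) (norm_nonneg _)
      _ = ‖B‖ := mul_one _
  calc ‖(3:ℂ)⁻¹‖ * ‖∑ m ∈ Finset.range 3, omg ^ (-(k * (m:ℤ))) • (W m * B * (W m)ᴴ)‖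
      ≤ ‖(3:ℂ)⁻¹‖ * ∑ m ∈ Finset.range 3, ‖omg ^ (-(k * (m:ℤ))) • (W m * B * (W m)ᴴ)‖ := by
        have := norm_sum_le (Finset.range 3) (fun m => omg ^ (-(k * (m:ℤ))) • (W m * B * (W m)ᴴ))
        have h3 : (0:ℝ) ≤ ‖(3:ℂ)⁻¹‖ := norm_nonneg _
        nlinarith
    _ ≤ ‖(3:ℂ)⁻¹‖ * (3 * ‖B‖) := by
        have hs := Finset.sum_le_sum hterm2
        rw [Finset.sum_const, Finset.card_range] at hs
        have h3 : (0:ℝ) ≤ ‖(3:ℂ)⁻¹‖ := norm_nonneg _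
        have : (3:ℕ) • ‖B‖ = 3 * ‖B‖ := by simp [nsmul_eq_mul]
        nlinarith [hs, this ▸ hs]
    _ = ‖B‖ := by
        rw [show ‖(3:ℂ)⁻¹‖ = 3⁻¹ by simp]
        ring


lemma exp_le_one_add_two_mul {t : ℝ} (ht0 : 0 ≤ t) (ht : t ≤ 1/2) :
    Real.exp t ≤ 1 + 2 * t := by
  have h1 : 1 - t ≤ Real.exp (-t) := by
    have := Real.add_one_le_exp (-t)
    linarith
  have h2 : Real.exp t * (1 - t) ≤ 1 := by
    have h3 := mul_le_mul_of_nonneg_left h1 (Real.exp_pos t).le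
    rw [← Real.exp_add] at h3
    simp at h3
    linarith
  nlinarith [Real.exp_pos t]

lemma key {d : ℕ} (X : Mat d) (f : Fin d → ℝ) (t : ℝ) (ht0 : 0 ≤ t) (ht : t ≤ 1/2)
    (hf0 : ∀ i, 0 ≤ f i) (hft : ∀ i, f i ≤ t) (c : ℝ) (hc0 : 0 ≤ c) (hc2 : c ≤ 2)
    (h1c : |1 - c| ≤ 2 * t) :
    ‖X - ((c:ℝ):ℂ) • ((Matrix.diagonal fun i => ((Real.exp (-(f i)) : ℝ) : ℂ)) * X *
        (Matrix.diagonal fun i => ((Real.exp (f i) : ℝ) : ℂ)))‖ ≤ 10 * t * ‖X‖ := by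
  set R : Mat d := Matrix.diagonal fun i => ((Real.exp (-(f i)) : ℝ) : ℂ) with hR
  set Rinv : Mat d := Matrix.diagonal fun i => ((Real.exp (f i) : ℝ) : ℂ) with hRinv
  have hfle : ∀ i, f i ≤ 1/2 := fun i => le_trans (hft i) ht
  have hRn : ‖R‖ ≤ 1 := by
    apply norm_diagonal_le zero_le_one
    intro i
    rw [Complex.norm_real, Real.norm_eq_abs, abs_of_pos (Real.exp_pos _)]
    exact Real.exp_le_one_iff.mpr (by linarith [hf0 i])
  have hRinvn : ‖Rinv‖ ≤ 2 := by
    apply norm_diagonal_le (by norm_num)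
    intro i
    rw [Complex.norm_real, Real.norm_eq_abs, abs_of_pos (Real.exp_pos _)]
    have := exp_le_one_add_two_mul (hf0 i) (hfle i)
    linarith [hft i, ht]
  have h1Rn : ‖(1 : Mat d) - R‖ ≤ t := by
    rw [show (1 : Mat d) - R = Matrix.diagonal fun i => 1 - ((Real.exp (-(f i)) : ℝ) : ℂ) by
      rw [hR, ← Matrix.diagonal_one, Matrix.diagonal_sub]]
    apply norm_diagonal_le ht0
    intro i
    have h1 : 1 - f i ≤ Real.exp (-(f i)) := by
      have := Real.add_one_le_exp (-(f i)); linarith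
    have h2 : Real.exp (-(f i)) ≤ 1 := Real.exp_le_one_iff.mpr (by linarith [hf0 i])
    rw [show (1 : ℂ) - ((Real.exp (-(f i)) : ℝ) : ℂ) = (((1 - Real.exp (-(f i)) : ℝ)) : ℂ) by
      push_cast; ring]
    rw [Complex.norm_real, Real.norm_eq_abs, abs_of_nonneg (by linarith)]
    linarith [hft i]
  have h1Rinvn : ‖(1 : Mat d) - Rinv‖ ≤ 2 * t := by
    rw [show (1 : Mat d) - Rinv = Matrix.diagonal fun i => 1 - ((Real.exp (f i) : ℝ) : ℂ) by
      rw [hRinv, ← Matrix.diagonal_one, Matrix.diagonal_sub]]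
    apply norm_diagonal_le (by linarith)
    intro i
    have h1 : 1 ≤ Real.exp (f i) := Real.one_le_exp_iff.mpr (hf0 i)
    have h2 : Real.exp (f i) ≤ 1 + 2 * f i := exp_le_one_add_two_mul (hf0 i) (hfle i)
    rw [show (1 : ℂ) - ((Real.exp (f i) : ℝ) : ℂ) = (((1 - Real.exp (f i) : ℝ)) : ℂ) by
      push_cast; ring]
    rw [Complex.norm_real, Real.norm_eq_abs, abs_of_nonpos (by linarith)]
    linarith [hft i]
  have hiden : X - ((c:ℝ):ℂ) • (R * X * Rinv)
      = ((1 - c : ℝ) : ℂ) • X + ((c:ℝ):ℂ) • (((1 : Mat d) - R) * X * Rinv + X * ((1 : Mat d) - Rinv)) := by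
    have halg : ((1 : Mat d) - R) * X * Rinv + X * ((1 : Mat d) - Rinv) = X - R * X * Rinv := by
      noncomm_ring
    rw [halg]
    push_cast
    rw [sub_smul, one_smul, smul_sub]
    abel
  rw [hiden]
  have hXR : ‖((1 : Mat d) - R) * X * Rinv‖ ≤ t * ‖X‖ * 2 := by
    calc ‖((1 : Mat d) - R) * X * Rinv‖ ≤ ‖((1 : Mat d) - R) * X‖ * ‖Rinv‖ :=
          Matrix.l2_opNorm_mul _ _
      _ ≤ (t * ‖X‖) * 2 := by
          have h1 : ‖((1 : Mat d) - R) * X‖ ≤ t * ‖X‖ := by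
            calc ‖((1 : Mat d) - R) * X‖ ≤ ‖(1 : Mat d) - R‖ * ‖X‖ := Matrix.l2_opNorm_mul _ _
              _ ≤ t * ‖X‖ := mul_le_mul_of_nonneg_right h1Rn (norm_nonneg _)
          exact mul_le_mul h1 hRinvn (norm_nonneg _) (by positivity)
  have hXRinv : ‖X * ((1 : Mat d) - Rinv)‖ ≤ ‖X‖ * (2 * t) := by
    calc ‖X * ((1 : Mat d) - Rinv)‖ ≤ ‖X‖ * ‖(1 : Mat d) - Rinv‖ := Matrix.l2_opNorm_mul _ _
      _ ≤ ‖X‖ * (2 * t) := mul_le_mul_of_nonneg_left h1Rinvn (norm_nonneg _)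
  calc ‖((1 - c : ℝ) : ℂ) • X + ((c:ℝ):ℂ) • (((1 : Mat d) - R) * X * Rinv + X * ((1 : Mat d) - Rinv))‖
      ≤ ‖((1 - c : ℝ) : ℂ) • X‖ + ‖((c:ℝ):ℂ) • (((1 : Mat d) - R) * X * Rinv + X * ((1 : Mat d) - Rinv))‖ :=
        norm_add_le _ _
    _ ≤ |1 - c| * ‖X‖ + c * (t * ‖X‖ * 2 + ‖X‖ * (2 * t)) := by
        rw [norm_smul, norm_smul, Complex.norm_real, Complex.norm_real,
          Real.norm_eq_abs, Real.norm_eq_abs, abs_of_nonneg hc0]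
        have hsum : ‖((1 : Mat d) - R) * X * Rinv + X * ((1 : Mat d) - Rinv)‖
            ≤ t * ‖X‖ * 2 + ‖X‖ * (2 * t) := le_trans (norm_add_le _ _) (by linarith)
        have := mul_le_mul_of_nonneg_left hsum hc0
        linarith
    _ ≤ 2 * t * ‖X‖ + 2 * (t * ‖X‖ * 2 + ‖X‖ * (2 * t)) := by
        have h1 : |1 - c| * ‖X‖ ≤ 2 * t * ‖X‖ := mul_le_mul_of_nonneg_right h1c (norm_nonneg _)
        have h2 : (0:ℝ) ≤ t * ‖X‖ * 2 + ‖X‖ * (2 * t) := by positivity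
        nlinarith
    _ = 10 * t * ‖X‖ := by ring


lemma core {d : ℕ} (E : Fin d → ℝ) {β μ : ℝ} (hβ : 0 < β) (hμ : 0 < μ) (h1 : β * μ ≤ 1)
    (B : Mat d) (hB : ∀ i j, μ < |E i - E j| → B i j = 0) :
    ‖B - (Matrix.diagonal fun i => ((Real.exp (-(β * E i)/2) : ℝ) : ℂ)) * B *
        (Matrix.diagonal fun i => ((Real.exp (β * E i/2) : ℝ) : ℂ))‖
      ≤ 15 * (β * μ) * ‖B‖ := by
  set t : ℝ := β * μ / 2 with hts
  have ht0 : 0 ≤ t := by positivity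
  have ht2 : t ≤ 1/2 := by rw [hts]; linarith
  set nn : Fin d → ℤ := fun i => ⌊E i / μ⌋ with hnns
  have hfl : ∀ a : Fin d, μ * (nn a : ℝ) ≤ E a := by
    intro a
    have h := Int.floor_le (E a / μ)
    rw [hnns]
    calc μ * (⌊E a / μ⌋ : ℝ) ≤ μ * (E a / μ) := by
          exact mul_le_mul_of_nonneg_left h hμ.le
      _ = E a := by field_simp
  have hfl2 : ∀ a : Fin d, E a < μ * ((nn a : ℝ) + 1) := by
    intro a
    have h := Int.lt_floor_add_one (E a / μ)
    rw [hnns]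
    calc E a = μ * (E a / μ) := by field_simp
      _ < μ * ((⌊E a / μ⌋ : ℝ) + 1) := by
          exact mul_lt_mul_of_pos_left h hμ
  have hnn : ∀ i j, B i j ≠ 0 → |nn i - nn j| ≤ 1 := by
    intro i j h0
    have hEij : |E i - E j| ≤ μ := by
      by_contra hcon
      exact h0 (hB i j (by linarith [not_le.mp hcon]))
    rw [abs_le] at hEij
    rw [abs_le]
    constructor
    · by_contra hcon
      push_neg at hcon
      have h2 : (nn j : ℝ) ≥ (nn i : ℝ) + 2 := by
        have : nn j ≥ nn i + 2 := by omega
        exact_mod_cast this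
      have := hfl j
      have := hfl2 i
      nlinarith
    · by_contra hcon
      push_neg at hcon
      have h2 : (nn i : ℝ) ≥ (nn j : ℝ) + 2 := by
        have : nn i ≥ nn j + 2 := by omega
        exact_mod_cast this
      have := hfl i
      have := hfl2 j
      nlinarith
  set f : Fin d → ℝ := fun i => β * (E i - μ * (nn i : ℝ)) / 2 with hfs
  have hf0 : ∀ i, 0 ≤ f i := by
    intro i
    have := hfl i
    rw [hfs]
    have h2 : (0:ℝ) ≤ E i - μ * (nn i : ℝ) := by linarith
    positivity
  have hft : ∀ i, f i ≤ t := by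
    intro i
    have := hfl2 i
    rw [hfs, hts]
    nlinarith
  set Bk : ℤ → Mat d := fun k => Matrix.of fun i j => if nn i - nn j = k then B i j else 0
    with hBks
  set Dl : Mat d := Matrix.diagonal fun i => ((Real.exp (-(β * E i)/2) : ℝ) : ℂ) with hDls
  set Dr : Mat d := Matrix.diagonal fun i => ((Real.exp (β * E i/2) : ℝ) : ℂ) with hDrs
  set R : Mat d := Matrix.diagonal fun i => ((Real.exp (-(f i)) : ℝ) : ℂ) with hRs
  set Rinv : Mat d := Matrix.diagonal fun i => ((Real.exp (f i) : ℝ) : ℂ) with hRinvs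
  have hsplit : B = Bk (-1) + Bk 0 + Bk 1 := by
    ext i j
    simp only [hBks, Matrix.add_apply, Matrix.of_apply]
    by_cases h0 : B i j = 0
    · simp [h0]
    · have hl := hnn i j h0
      rw [abs_le] at hl
      have : nn i - nn j = -1 ∨ nn i - nn j = 0 ∨ nn i - nn j = 1 := by omega
      rcases this with h | h | h <;>
        · rw [h]
          norm_num
  have hbound : ∀ k : ℤ, |k| ≤ 1 → ‖Bk k - Dl * Bk k * Dr‖ ≤ 10 * t * ‖B‖ := by
    intro k hk
    have hkabs := hk
    rw [abs_le] at hkabs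
    have hkr1 : (-1 : ℝ) ≤ (k : ℝ) := by exact_mod_cast hkabs.1
    have hkr2 : (k : ℝ) ≤ 1 := by exact_mod_cast hkabs.2
    set c : ℝ := Real.exp (-(k:ℝ) * t) with hcs
    have hc0 : 0 ≤ c := (Real.exp_pos _).le
    have hclow : Real.exp (-t) ≤ c := by
      apply Real.exp_le_exp.mpr
      nlinarith
    have hchigh : c ≤ Real.exp t := by
      apply Real.exp_le_exp.mpr
      nlinarith
    have hexpt : Real.exp t ≤ 1 + 2 * t := exp_le_one_add_two_mul ht0 ht2
    have hexpnt : 1 - t ≤ Real.exp (-t) := by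
      have := Real.add_one_le_exp (-t); linarith
    have hc2 : c ≤ 2 := by linarith
    have h1c : |1 - c| ≤ 2 * t := by
      rw [abs_le]
      constructor <;> linarith
    have hident : Dl * Bk k * Dr = ((c : ℝ) : ℂ) • (R * Bk k * Rinv) := by
      ext i j
      rw [hDls, hDrs, hRs, hRinvs, Matrix.smul_apply, Matrix.mul_diagonal, Matrix.diagonal_mul,
        Matrix.mul_diagonal, Matrix.diagonal_mul]
      by_cases hcase : nn i - nn j = k
      · have hkr : (nn i : ℝ) - (nn j : ℝ) = (k : ℝ) := by exact_mod_cast congrArg Int.cast hcase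
        have hr : Real.exp (-(β * E i)/2) * Real.exp (β * E j/2)
            = c * (Real.exp (-(f i)) * Real.exp (f j)) := by
          rw [hcs, ← Real.exp_add, ← Real.exp_add, ← Real.exp_add, hfs]
          congr 1
          simp only
          rw [hts]
          linear_combination (-(β * μ)/2) * hkr
        calc ((Real.exp (-(β * E i)/2) : ℝ) : ℂ) * Bk k i j * ((Real.exp (β * E j/2) : ℝ) : ℂ)
            = (((Real.exp (-(β * E i)/2) * Real.exp (β * E j/2) : ℝ)) : ℂ) * Bk k i j := by
              push_cast; ring
          _ = (((c * (Real.exp (-(f i)) * Real.exp (f j)) : ℝ)) : ℂ) * Bk k i j := by rw [hr]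
          _ = ((c : ℝ) : ℂ) • (((Real.exp (-(f i)) : ℝ) : ℂ) * Bk k i j * ((Real.exp (f j) : ℝ) : ℂ)) := by
              push_cast; rw [smul_eq_mul]; ring
      · have hzero : Bk k i j = 0 := by
          rw [hBks]
          simp only [Matrix.of_apply]
          rw [if_neg hcase]
        rw [hzero]
        simp
    rw [hident]
    have h10 := key (Bk k) f t ht0 ht2 hf0 hft c hc0 hc2 h1c
    rw [← hRs, ← hRinvs] at h10
    have hBkn : ‖Bk k‖ ≤ ‖B‖ := norm_part_le nn B hnn k hk
    calc ‖Bk k - ((c : ℝ) : ℂ) • (R * Bk k * Rinv)‖ ≤ 10 * t * ‖Bk k‖ := h10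
      _ ≤ 10 * t * ‖B‖ := by
          apply mul_le_mul_of_nonneg_left hBkn
          positivity
  have hsplit2 : B - Dl * B * Dr
      = (Bk (-1) - Dl * Bk (-1) * Dr) + ((Bk 0 - Dl * Bk 0 * Dr) + (Bk 1 - Dl * Bk 1 * Dr)) := by
    nth_rewrite 1 [hsplit]
    nth_rewrite 1 [hsplit]
    noncomm_ring
  rw [hsplit2]
  have hm1 := hbound (-1) (by norm_num)
  have h00 := hbound 0 (by norm_num)
  have hp1 := hbound 1 (by norm_num)
  calc ‖(Bk (-1) - Dl * Bk (-1) * Dr) + ((Bk 0 - Dl * Bk 0 * Dr) + (Bk 1 - Dl * Bk 1 * Dr))‖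
      ≤ ‖Bk (-1) - Dl * Bk (-1) * Dr‖ + (‖Bk 0 - Dl * Bk 0 * Dr‖ + ‖Bk 1 - Dl * Bk 1 * Dr‖) :=
        le_trans (norm_add_le _ _) (by linarith [norm_add_le (Bk 0 - Dl * Bk 0 * Dr) (Bk 1 - Dl * Bk 1 * Dr)])
    _ ≤ 10 * t * ‖B‖ + (10 * t * ‖B‖ + 10 * t * ‖B‖) := by linarith
    _ = 15 * (β * μ) * ‖B‖ := by rw [hts]; ring

/-- Operators whose matrix elements vanish between eigenstates whose energies
differ by more than `μ` approximately commute with powers of the Gibbs state: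
`‖A - ρ^{1/2} A ρ^{-1/2}‖ ≤ C·βμ·‖A‖`. -/
theorem stmt18 :
    ∃ C : ℝ, 0 < C ∧
      ∀ (d : ℕ), 1 ≤ d →
      ∀ (H : Mat d) (E : Fin d → ℝ) (ψ : Fin d → Fin d → ℂ),
        H.IsHermitian →
        (∀ i j, dotProduct (star (ψ i)) (ψ j) = if i = j then 1 else 0) →
        (∀ j, H.mulVec (ψ j) = ((E j : ℝ) : ℂ) • ψ j) →
      ∀ β μ : ℝ, 0 < β → 0 < μ → β * μ ≤ 1 →
      ∀ A : Mat d,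
        (∀ i j, μ < |E i - E j| → dotProduct (star (ψ i)) (A.mulVec (ψ j)) = 0) →
      ∀ ρh : Mat d, ρh.PosDef → ρh ^ 2 = gibbs H β →
        opNorm (A - ρh * A * ρh⁻¹) ≤ C * (β * μ) * opNorm A := by
  refine ⟨15, by norm_num, ?_⟩
  intro d hd H E ψ hH horth heig β μ hβ hμ hβμ A hA ρh hρpd hρ2
  have hdpos : 0 < d := hd
  set U : Mat d := Matrix.of fun i j => ψ j i with hUs
  have hUU : Uᴴ * U = 1 := by
    ext i j
    have h := horth i j
    simp only [dotProduct, Pi.star_apply] at h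
    simp only [Matrix.mul_apply, Matrix.conjTranspose_apply, hUs, Matrix.of_apply,
      Matrix.one_apply]
    exact h
  have hUU' : U * Uᴴ = 1 := mul_eq_one_comm.mp hUU
  have hU1 : IsUnit U := ⟨⟨U, Uᴴ, hUU', hUU⟩, rfl⟩
  have hUinv : U⁻¹ = Uᴴ := Matrix.inv_eq_left_inv hUU
  set DE : Mat d := Matrix.diagonal fun i => ((E i : ℝ) : ℂ) with hDEs
  have hHU : H * U = U * DE := by
    ext i j
    have h := congrFun (heig j) i
    simp only [Matrix.mulVec, dotProduct, Pi.smul_apply, smul_eq_mul] at h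
    rw [show (H * U) i j = ∑ x, H i x * ψ j x by simp [Matrix.mul_apply, hUs],
      show (U * DE) i j = ψ j i * ((E j : ℝ) : ℂ) by
        rw [hDEs, Matrix.mul_diagonal]; simp [hUs],
      h]
    ring
  have hH2 : H = U * DE * Uᴴ := by
    calc H = H * (U * Uᴴ) := by rw [hUU', mul_one]
      _ = (H * U) * Uᴴ := (mul_assoc _ _ _).symm
      _ = U * DE * Uᴴ := by rw [hHU]
  have hexp : NormedSpace.exp ((-(β:ℂ)) • H)
      = U * (Matrix.diagonal fun i => ((Real.exp (-(β * E i)) : ℝ) : ℂ)) * Uᴴ := by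
    have h1 : (-(β:ℂ)) • H = U * ((-(β:ℂ)) • DE) * U⁻¹ := by
      rw [hUinv, hH2, mul_smul_comm, smul_mul_assoc]
    rw [h1, Matrix.exp_conj U _ hU1, hUinv]
    congr 2
    rw [hDEs, ← Matrix.diagonal_smul, Matrix.exp_diagonal]
    refine congrArg Matrix.diagonal (funext fun i => ?_)
    rw [Pi.coe_exp, ← Complex.exp_eq_exp_ℂ]
    rw [show ((-(β:ℂ)) • fun i => ((E i : ℝ) : ℂ)) i = ((-(β * E i) : ℝ) : ℂ) by
      rw [Pi.smul_apply, smul_eq_mul]; push_cast; ring]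
    exact (Complex.ofReal_exp _).symm
  set Z : ℝ := ∑ i, Real.exp (-(β * E i)) with hZs
  have hZpos : 0 < Z :=
    Finset.sum_pos (fun i _ => Real.exp_pos _) ⟨⟨0, hdpos⟩, Finset.mem_univ _⟩
  have htrace : (NormedSpace.exp ((-(β:ℂ)) • H)).trace = (Z:ℂ) := by
    rw [hexp, Matrix.trace_mul_cycle, hUU, one_mul, Matrix.trace_diagonal, hZs]
    push_cast
    rfl
  have hgibbs : gibbs H β
      = U * (Matrix.diagonal fun i => ((Real.exp (-(β * E i)) / Z : ℝ) : ℂ)) * Uᴴ := by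
    have hdiag : ((Z:ℂ))⁻¹ • (Matrix.diagonal fun i => ((Real.exp (-(β * E i)) : ℝ) : ℂ))
        = Matrix.diagonal fun i => ((Real.exp (-(β * E i)) / Z : ℝ) : ℂ) := by
      rw [← Matrix.diagonal_smul]
      refine congrArg Matrix.diagonal (funext fun i => ?_)
      rw [Pi.smul_apply, smul_eq_mul]
      push_cast
      ring
    rw [gibbs, htrace, hexp, ← hdiag, mul_smul_comm, smul_mul_assoc]
  set s : Fin d → ℝ := fun i => Real.exp (-(β * E i)/2) / Real.sqrt Z with hss
  have hspos : ∀ i, 0 < s i := fun i => div_pos (Real.exp_pos _) (Real.sqrt_pos.mpr hZpos)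
  set Ds : Mat d := Matrix.diagonal fun i => ((s i : ℝ) : ℂ) with hDss
  have hDspsd : Ds.PosSemidef := Matrix.posSemidef_diagonal_iff.mpr fun i =>
    Complex.zero_le_real.mpr (hspos i).le
  set S : Mat d := U * Ds * Uᴴ with hSs
  have hSpsd : S.PosSemidef := hDspsd.mul_mul_conjTranspose_same U
  have hS2 : S ^ 2 = gibbs H β := by
    rw [hSs, pow_two, hgibbs,
      show (U * Ds * Uᴴ) * (U * Ds * Uᴴ) = U * (Ds * (Uᴴ * U) * Ds) * Uᴴ by noncomm_ring,
      hUU, mul_one, hDss, Matrix.diagonal_mul_diagonal]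
    have hdd : (fun i => ((s i : ℝ) : ℂ) * ((s i : ℝ) : ℂ))
        = fun i => ((Real.exp (-(β * E i)) / Z : ℝ) : ℂ) := by
      funext i
      have hr : s i * s i = Real.exp (-(β * E i)) / Z := by
        rw [hss]
        simp only
        rw [div_mul_div_comm, ← Real.exp_add, Real.mul_self_sqrt hZpos.le]
        congr 2
        ring
      rw [← Complex.ofReal_mul, hr]
    rw [hdd]
  have hρS : ρh = S := by
    open MatrixOrder in
    exact (CFC.sq_eq_sq_iff ρh S hρpd.posSemidef.nonneg hSpsd.nonneg).mp (by rw [hρ2, hS2])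
  set Ds' : Mat d := Matrix.diagonal fun i => (((s i)⁻¹ : ℝ) : ℂ) with hDs's
  have hρinv : ρh⁻¹ = U * Ds' * Uᴴ := by
    apply Matrix.inv_eq_right_inv
    rw [hρS, hSs,
      show (U * Ds * Uᴴ) * (U * Ds' * Uᴴ) = U * (Ds * (Uᴴ * U) * Ds') * Uᴴ by noncomm_ring,
      hUU, mul_one, hDss, hDs's, Matrix.diagonal_mul_diagonal]
    have hone : (Matrix.diagonal fun i => ((s i : ℝ) : ℂ) * (((s i)⁻¹ : ℝ) : ℂ)) = (1 : Mat d) := by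
      rw [← Matrix.diagonal_one]
      refine congrArg Matrix.diagonal (funext fun i => ?_)
      rw [← Complex.ofReal_mul, mul_inv_cancel₀ (hspos i).ne']
      simp
    rw [hone, mul_one, hUU']
  set A' : Mat d := Uᴴ * A * U with hA's
  have hAUA' : A = U * A' * Uᴴ := by
    rw [hA's,
      show U * (Uᴴ * A * U) * Uᴴ = (U * Uᴴ) * A * (U * Uᴴ) by noncomm_ring, hUU', one_mul,
      mul_one]
  have hA'zero : ∀ i j, μ < |E i - E j| → A' i j = 0 := by
    intro i j hij
    have h0 := hA i j hij
    simp only [dotProduct, Matrix.mulVec, Pi.star_apply] at h0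
    have expand : A' i j = ∑ x, (∑ k, star (ψ i k) * A k x) * ψ j x := by
      rw [hA's]
      simp only [Matrix.mul_apply, Matrix.conjTranspose_apply, hUs, Matrix.of_apply]
    calc A' i j = ∑ x, (∑ k, star (ψ i k) * A k x) * ψ j x := expand
      _ = ∑ x, ∑ k, star (ψ i k) * (A k x * ψ j x) := by
          apply Finset.sum_congr rfl
          intro x _
          rw [Finset.sum_mul]
          apply Finset.sum_congr rfl
          intro k _
          ring
      _ = ∑ k, ∑ x, star (ψ i k) * (A k x * ψ j x) := Finset.sum_comm
      _ = ∑ k, star (ψ i k) * ∑ x, A k x * ψ j x := by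
          apply Finset.sum_congr rfl
          intro k _
          rw [Finset.mul_sum]
      _ = 0 := h0
  set Dl : Mat d := Matrix.diagonal fun i => ((Real.exp (-(β * E i)/2) : ℝ) : ℂ) with hDls
  set Dr : Mat d := Matrix.diagonal fun i => ((Real.exp (β * E i/2) : ℝ) : ℂ) with hDrs
  have hDsD : Ds * A' * Ds' = Dl * A' * Dr := by
    ext i j
    rw [hDss, hDs's, hDls, hDrs, Matrix.mul_diagonal, Matrix.diagonal_mul, Matrix.mul_diagonal,
      Matrix.diagonal_mul]
    have hreal : s i * (s j)⁻¹ = Real.exp (-(β * E i)/2) * Real.exp (β * E j/2) := by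
      have h1 : Real.exp (β * E j/2) = (Real.exp (-(β * E j)/2))⁻¹ := by
        rw [← Real.exp_neg]
        congr 1
        ring
      have hsz : Real.sqrt Z ≠ 0 := (Real.sqrt_pos.mpr hZpos).ne'
      have hej : Real.exp (-(β * E j)/2) ≠ 0 := (Real.exp_pos _).ne'
      rw [h1, hss]
      simp only
      field_simp
    calc ((s i : ℝ) : ℂ) * A' i j * (((s j)⁻¹ : ℝ) : ℂ)
        = (((s i * (s j)⁻¹ : ℝ)) : ℂ) * A' i j := by push_cast; ring
      _ = ((Real.exp (-(β * E i)/2) : ℝ) : ℂ) * A' i j * ((Real.exp (β * E j/2) : ℝ) : ℂ) := by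
          rw [hreal]; push_cast; ring
  have hconj : A - ρh * A * ρh⁻¹ = U * (A' - Dl * A' * Dr) * Uᴴ := by
    have h2 : ρh * A * ρh⁻¹ = U * (Dl * A' * Dr) * Uᴴ := by
      rw [hρinv, hρS, hSs]
      nth_rewrite 1 [hAUA']
      rw [show (U * Ds * Uᴴ) * (U * A' * Uᴴ) * (U * Ds' * Uᴴ)
          = U * (Ds * (Uᴴ * U) * A' * (Uᴴ * U) * Ds') * Uᴴ by noncomm_ring, hUU]
      rw [show Ds * 1 * A' * 1 * Ds' = Ds * A' * Ds' by noncomm_ring, hDsD]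
    rw [h2]
    nth_rewrite 1 [hAUA']
    rw [mul_sub, sub_mul]
  rw [opNorm_eq, opNorm_eq, hconj, norm_unitary_conj hdpos hUU,
    show ‖A‖ = ‖A'‖ by rw [hAUA', norm_unitary_conj hdpos hUU]]
  exact core E hβ hμ hβμ A' hA'zero


end Stmt18
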